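/- Let C be an n×n covariance matrix, H a k×n observation matrix, R a k×k symmetric positive definite matrix, and let Ĉ = (C⁻¹ + Hᵀ R⁻¹ H)⁻¹ be the posterior covariance of a linear-Gaussian inverse problem. If C_loc and H_loc are localized versions with ‖C − C_loc‖ ≤ δ_C < ‖C⁻¹‖⁻¹ and ‖H − H_loc‖ ≤ δ_H, with ‖H‖ ≤ 1, and Δ₁ := ‖C⁻¹‖²δ_C/(1 − δ_C‖C⁻¹‖) + (2δ_H + δ_H²)‖R⁻¹‖ < ‖Ĉ‖⁻¹, then ‖Ĉ − Ĉ_loc‖ ≤ ‖Ĉ‖²Δ₁ / (1 − Δ₁‖Ĉ‖), where Ĉ_loc = (C_loc⁻¹ + H_locᵀ R⁻¹ H_loc)⁻¹. -/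

import Mathlib

open Matrix
open scoped Matrix.Norms.L2Operator

/-- Resolvent perturbation bound for inverses of positive definite matrices. -/
private lemma aux_inv_perturb {n : ℕ} (A B : Matrix (Fin n) (Fin n) ℝ)
    (hA : A.PosDef) (hB : B.PosDef) (ε : ℝ)
    (hε : ‖A - B‖ ≤ ε) (hsmall : ε * ‖A⁻¹‖ < 1) :
    ‖A⁻¹ - B⁻¹‖ ≤ ‖A⁻¹‖ ^ 2 * ε / (1 - ε * ‖A⁻¹‖) := by
  have hε0 : 0 ≤ ε := le_trans (norm_nonneg _) hε
  have h1 : A * A⁻¹ = 1 :=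
    Matrix.mul_nonsing_inv A ((Matrix.isUnit_iff_isUnit_det A).mp hA.isUnit)
  have h2 : B⁻¹ * B = 1 :=
    Matrix.nonsing_inv_mul B ((Matrix.isUnit_iff_isUnit_det B).mp hB.isUnit)
  have key : B⁻¹ - A⁻¹ = B⁻¹ * (A - B) * A⁻¹ := by
    rw [Matrix.mul_sub, h2, Matrix.sub_mul, one_mul, Matrix.mul_assoc, h1, mul_one]
  have hd : 0 < 1 - ε * ‖A⁻¹‖ := by linarith
  have hkey : ‖B⁻¹ - A⁻¹‖ ≤ ‖B⁻¹‖ * ε * ‖A⁻¹‖ := by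
    rw [key]
    calc ‖B⁻¹ * (A - B) * A⁻¹‖ ≤ ‖B⁻¹ * (A - B)‖ * ‖A⁻¹‖ := norm_mul_le _ _
      _ ≤ ‖B⁻¹‖ * ‖A - B‖ * ‖A⁻¹‖ := by
          gcongr; exact norm_mul_le _ _
      _ ≤ ‖B⁻¹‖ * ε * ‖A⁻¹‖ := by gcongr
  have hBle : ‖B⁻¹‖ ≤ ‖A⁻¹‖ + ‖B⁻¹‖ * ε * ‖A⁻¹‖ := by
    calc ‖B⁻¹‖ = ‖A⁻¹ + (B⁻¹ - A⁻¹)‖ := by congr 1; abel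
      _ ≤ ‖A⁻¹‖ + ‖B⁻¹ - A⁻¹‖ := norm_add_le _ _
      _ ≤ ‖A⁻¹‖ + ‖B⁻¹‖ * ε * ‖A⁻¹‖ := by linarith
  have hBnorm : ‖B⁻¹‖ ≤ ‖A⁻¹‖ / (1 - ε * ‖A⁻¹‖) := by
    rw [le_div_iff₀ hd]
    nlinarith
  have hmain : ‖A⁻¹ - B⁻¹‖ ≤ (‖A⁻¹‖ / (1 - ε * ‖A⁻¹‖)) * ε * ‖A⁻¹‖ := by
    rw [norm_sub_rev]
    calc ‖B⁻¹ - A⁻¹‖ ≤ ‖B⁻¹‖ * ε * ‖A⁻¹‖ := hkey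
      _ ≤ (‖A⁻¹‖ / (1 - ε * ‖A⁻¹‖)) * ε * ‖A⁻¹‖ := by gcongr
  calc ‖A⁻¹ - B⁻¹‖ ≤ (‖A⁻¹‖ / (1 - ε * ‖A⁻¹‖)) * ε * ‖A⁻¹‖ := hmain
    _ = ‖A⁻¹‖ ^ 2 * ε / (1 - ε * ‖A⁻¹‖) := by field_simp

/-- localization bound for the posterior covariance of a linear–Gaussian
inverse problem, covariance-matrix form.  With `Ĉ = (C⁻¹ + Hᵀ R⁻¹ H)⁻¹`,
`Ĉ_loc = (C_loc⁻¹ + H_locᵀ R⁻¹ H_loc)⁻¹`, `‖C - C_loc‖ ≤ δ_C < ‖C⁻¹‖⁻¹`,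
`‖H - H_loc‖ ≤ δ_H`, `‖H‖ ≤ 1`, and
`Δ₁ = ‖C⁻¹‖² δ_C/(1 - δ_C ‖C⁻¹‖) + (2δ_H + δ_H²) ‖R⁻¹‖ < ‖Ĉ‖⁻¹`, one has
`‖Ĉ - Ĉ_loc‖ ≤ ‖Ĉ‖² Δ₁ / (1 - Δ₁ ‖Ĉ‖)`. -/
theorem posterior_covariance_localization_bound
    {n k : ℕ} (C Cloc : Matrix (Fin n) (Fin n) ℝ) (hC : C.PosDef) (hCloc : Cloc.PosDef)
    (H Hloc : Matrix (Fin k) (Fin n) ℝ) (R : Matrix (Fin k) (Fin k) ℝ) (hR : R.PosDef)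
    (hH : ‖H‖ ≤ 1) (δC δH : ℝ)
    (hδC : ‖C - Cloc‖ ≤ δC) (hδCsmall : δC < ‖C⁻¹‖⁻¹)
    (hδH : ‖H - Hloc‖ ≤ δH)
    (Δ₁ : ℝ)
    (hΔ₁ : Δ₁ = ‖C⁻¹‖ ^ 2 * δC / (1 - δC * ‖C⁻¹‖) + (2 * δH + δH ^ 2) * ‖R⁻¹‖)
    (hΔ₁small : Δ₁ < ‖(C⁻¹ + Hᵀ * R⁻¹ * H)⁻¹‖⁻¹) :
    ‖(C⁻¹ + Hᵀ * R⁻¹ * H)⁻¹ - (Cloc⁻¹ + Hlocᵀ * R⁻¹ * Hloc)⁻¹‖ ≤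
      ‖(C⁻¹ + Hᵀ * R⁻¹ * H)⁻¹‖ ^ 2 * Δ₁ / (1 - Δ₁ * ‖(C⁻¹ + Hᵀ * R⁻¹ * H)⁻¹‖) := by
  have δC0 : 0 ≤ δC := le_trans (norm_nonneg _) hδC
  have δH0 : 0 ≤ δH := le_trans (norm_nonneg _) hδH
  have hCn : 0 < ‖C⁻¹‖ := by
    rcases (norm_nonneg (C⁻¹)).eq_or_lt with h | h
    · rw [← h, _root_.inv_zero] at hδCsmall; linarith
    · exact h
  have hdC : δC * ‖C⁻¹‖ < 1 := by
    calc δC * ‖C⁻¹‖ < ‖C⁻¹‖⁻¹ * ‖C⁻¹‖ := mul_lt_mul_of_pos_right hδCsmall hCn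
      _ = 1 := inv_mul_cancel₀ hCn.ne'
  have hHt : (Hᵀ * R⁻¹ * H).PosSemidef := by
    have := hR.inv.posSemidef.conjTranspose_mul_mul_same H
    rwa [conjTranspose_eq_transpose_of_trivial] at this
  have hHtloc : (Hlocᵀ * R⁻¹ * Hloc).PosSemidef := by
    have := hR.inv.posSemidef.conjTranspose_mul_mul_same Hloc
    rwa [conjTranspose_eq_transpose_of_trivial] at this
  have hA : (C⁻¹ + Hᵀ * R⁻¹ * H).PosDef := hC.inv.add_posSemidef hHt
  have hB : (Cloc⁻¹ + Hlocᵀ * R⁻¹ * Hloc).PosDef := hCloc.inv.add_posSemidef hHtloc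
  have hCbound : ‖C⁻¹ - Cloc⁻¹‖ ≤ ‖C⁻¹‖ ^ 2 * δC / (1 - δC * ‖C⁻¹‖) :=
    aux_inv_perturb C Cloc hC hCloc δC hδC hdC
  have hHtn : ‖Hᵀ‖ = ‖H‖ := by
    rw [← conjTranspose_eq_transpose_of_trivial]; exact Matrix.l2_opNorm_conjTranspose H
  have hHdn : ‖(H - Hloc)ᵀ‖ = ‖H - Hloc‖ := by
    rw [← conjTranspose_eq_transpose_of_trivial]; exact Matrix.l2_opNorm_conjTranspose _
  have hHlocn : ‖Hloc‖ ≤ 1 + δH := by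
    calc ‖Hloc‖ = ‖H - (H - Hloc)‖ := by congr 1; abel
      _ ≤ ‖H‖ + ‖H - Hloc‖ := norm_sub_le _ _
      _ ≤ 1 + δH := by linarith
  have hid : Hᵀ * R⁻¹ * H - Hlocᵀ * R⁻¹ * Hloc
      = Hᵀ * R⁻¹ * (H - Hloc) + (H - Hloc)ᵀ * (R⁻¹ * Hloc) := by
    rw [Matrix.mul_sub, Matrix.transpose_sub, Matrix.sub_mul,
      ← Matrix.mul_assoc, ← Matrix.mul_assoc]
    abel
  have hobs : ‖Hᵀ * R⁻¹ * H - Hlocᵀ * R⁻¹ * Hloc‖ ≤ (2 * δH + δH ^ 2) * ‖R⁻¹‖ := by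
    rw [hid]
    have t1 : ‖Hᵀ * R⁻¹ * (H - Hloc)‖ ≤ 1 * ‖R⁻¹‖ * δH := by
      calc ‖Hᵀ * R⁻¹ * (H - Hloc)‖ ≤ ‖Hᵀ * R⁻¹‖ * ‖H - Hloc‖ :=
            Matrix.l2_opNorm_mul _ _
        _ ≤ ‖Hᵀ‖ * ‖R⁻¹‖ * ‖H - Hloc‖ := by
            gcongr; exact Matrix.l2_opNorm_mul _ _
        _ ≤ 1 * ‖R⁻¹‖ * δH := by
            rw [hHtn]; gcongr
    have t2 : ‖(H - Hloc)ᵀ * (R⁻¹ * Hloc)‖ ≤ δH * (‖R⁻¹‖ * (1 + δH)) := by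
      calc ‖(H - Hloc)ᵀ * (R⁻¹ * Hloc)‖ ≤ ‖(H - Hloc)ᵀ‖ * ‖R⁻¹ * Hloc‖ :=
            Matrix.l2_opNorm_mul _ _
        _ ≤ ‖(H - Hloc)ᵀ‖ * (‖R⁻¹‖ * ‖Hloc‖) := by
            gcongr; exact Matrix.l2_opNorm_mul _ _
        _ ≤ δH * (‖R⁻¹‖ * (1 + δH)) := by
            rw [hHdn]; gcongr
    calc ‖Hᵀ * R⁻¹ * (H - Hloc) + (H - Hloc)ᵀ * (R⁻¹ * Hloc)‖
        ≤ ‖Hᵀ * R⁻¹ * (H - Hloc)‖ + ‖(H - Hloc)ᵀ * (R⁻¹ * Hloc)‖ := norm_add_le _ _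
      _ ≤ 1 * ‖R⁻¹‖ * δH + δH * (‖R⁻¹‖ * (1 + δH)) := by linarith
      _ = (2 * δH + δH ^ 2) * ‖R⁻¹‖ := by ring
  have hAB : ‖(C⁻¹ + Hᵀ * R⁻¹ * H) - (Cloc⁻¹ + Hlocᵀ * R⁻¹ * Hloc)‖ ≤ Δ₁ := by
    have heq : (C⁻¹ + Hᵀ * R⁻¹ * H) - (Cloc⁻¹ + Hlocᵀ * R⁻¹ * Hloc)
        = (C⁻¹ - Cloc⁻¹) + (Hᵀ * R⁻¹ * H - Hlocᵀ * R⁻¹ * Hloc) := by abel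
    rw [heq, hΔ₁]
    calc ‖(C⁻¹ - Cloc⁻¹) + (Hᵀ * R⁻¹ * H - Hlocᵀ * R⁻¹ * Hloc)‖
        ≤ ‖C⁻¹ - Cloc⁻¹‖ + ‖Hᵀ * R⁻¹ * H - Hlocᵀ * R⁻¹ * Hloc‖ := norm_add_le _ _
      _ ≤ ‖C⁻¹‖ ^ 2 * δC / (1 - δC * ‖C⁻¹‖) + (2 * δH + δH ^ 2) * ‖R⁻¹‖ := by
          linarith
  have hΔ0 : 0 ≤ Δ₁ := le_trans (norm_nonneg _) hAB
  have hAn : 0 < ‖(C⁻¹ + Hᵀ * R⁻¹ * H)⁻¹‖ := by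
    rcases (norm_nonneg ((C⁻¹ + Hᵀ * R⁻¹ * H)⁻¹)).eq_or_lt with h | h
    · rw [← h, _root_.inv_zero] at hΔ₁small; linarith
    · exact h
  have hsm : Δ₁ * ‖(C⁻¹ + Hᵀ * R⁻¹ * H)⁻¹‖ < 1 := by
    calc Δ₁ * ‖(C⁻¹ + Hᵀ * R⁻¹ * H)⁻¹‖
        < ‖(C⁻¹ + Hᵀ * R⁻¹ * H)⁻¹‖⁻¹ * ‖(C⁻¹ + Hᵀ * R⁻¹ * H)⁻¹‖ :=
          mul_lt_mul_of_pos_right hΔ₁small hAn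
      _ = 1 := inv_mul_cancel₀ hAn.ne'
  exact aux_inv_perturb _ _ hA hB Δ₁ hAB hsm
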